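/- Consider a sequence of row-stochastic matrices A(t) ∈ ℝ^{n×n}, t ∈ ℕ, and the dynamics x(t+1) = A(t) x(t). Suppose (i) there is α > 0 with a_{ij}(t) ≥ α whenever a_{ij}(t) > 0, (ii) there is β > 0 with a_{ii}(t) ≥ β for all i, t, and (iii) each A(t) is cut-balanced. Then for each i the limit x_i* = lim_{t→∞} x_i(t) exists. -/

import Mathlib

namespace CutBal

noncomputable def gap (y : ℕ → ℝ) (m : ℕ) : ℝ := y (m+1) - y m

noncomputable def uS (n : ℕ) (b : ℕ → ℕ → ℝ) (T : Finset ℕ) (m : ℕ) : ℝ :=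
  ∑ p ∈ T, ∑ q ∈ Finset.range n, if p ≤ m ∧ m < q then b p q else 0

noncomputable def dS (n : ℕ) (b : ℕ → ℕ → ℝ) (T : Finset ℕ) (m : ℕ) : ℝ :=
  ∑ p ∈ T, ∑ q ∈ Finset.range n, if q ≤ m ∧ m < p then b p q else 0

noncomputable def UU (n : ℕ) (b : ℕ → ℕ → ℝ) (m : ℕ) : ℝ := uS n b (Finset.range n) m
noncomputable def DD (n : ℕ) (b : ℕ → ℕ → ℝ) (m : ℕ) : ℝ := dS n b (Finset.range n) m

lemma sum_ite_Ico (y : ℕ → ℝ) {n p q : ℕ} (hq : q ≤ n) (hpq : p ≤ q) :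
    (∑ m ∈ Finset.range n, if p ≤ m ∧ m < q then gap y m else 0) = y q - y p := by
  rw [← Finset.sum_filter]
  have hfilter : (Finset.range n).filter (fun m => p ≤ m ∧ m < q) = Finset.Ico p q := by
    ext m; simp only [Finset.mem_filter, Finset.mem_range, Finset.mem_Ico]; omega
  rw [hfilter]
  unfold gap
  rw [Finset.sum_Ico_eq_sub _ hpq, Finset.sum_range_sub (fun k => y k),
    Finset.sum_range_sub (fun k => y k)]
  ring

lemma sum_ite_empty (y : ℕ → ℝ) {n p q : ℕ} (hpq : q ≤ p) :
    (∑ m ∈ Finset.range n, if p ≤ m ∧ m < q then gap y m else 0) = 0 := by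
  apply Finset.sum_eq_zero
  intro m _
  have : ¬ (p ≤ m ∧ m < q) := by omega
  simp [this]

lemma tele (y : ℕ → ℝ) {n p q : ℕ} (hp : p ≤ n) (hq : q ≤ n) :
    y q - y p = (∑ m ∈ Finset.range n, if p ≤ m ∧ m < q then gap y m else 0)
      - (∑ m ∈ Finset.range n, if q ≤ m ∧ m < p then gap y m else 0) := by
  rcases le_total p q with h | h
  · rw [sum_ite_Ico y hq h, sum_ite_empty y h]; ring
  · rw [sum_ite_Ico y hp h, sum_ite_empty y h]; ring

lemma key_identity (n : ℕ) (b : ℕ → ℕ → ℝ) (y : ℕ → ℝ) (T : Finset ℕ)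
    (hT : T ⊆ Finset.range n) :
    ∑ p ∈ T, ∑ q ∈ Finset.range n, b p q * (y q - y p)
      = ∑ m ∈ Finset.range n, gap y m * (uS n b T m - dS n b T m) := by
  have step : ∀ p ∈ T, ∀ q ∈ Finset.range n,
      b p q * (y q - y p) = ∑ m ∈ Finset.range n,
        gap y m * ((if p ≤ m ∧ m < q then b p q else 0) - (if q ≤ m ∧ m < p then b p q else 0)) := by
    intro p hp q hq
    have hp' : p ≤ n := le_of_lt (Finset.mem_range.mp (hT hp))
    have hq' : q ≤ n := le_of_lt (Finset.mem_range.mp hq)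
    rw [tele y hp' hq', mul_sub, Finset.mul_sum, Finset.mul_sum, ← Finset.sum_sub_distrib]
    apply Finset.sum_congr rfl
    intro m _
    split_ifs <;> ring
  calc ∑ p ∈ T, ∑ q ∈ Finset.range n, b p q * (y q - y p)
      = ∑ p ∈ T, ∑ q ∈ Finset.range n, ∑ m ∈ Finset.range n,
          gap y m * ((if p ≤ m ∧ m < q then b p q else 0) - (if q ≤ m ∧ m < p then b p q else 0)) := by
        exact Finset.sum_congr rfl fun p hp => Finset.sum_congr rfl fun q hq => step p hp q hq
    _ = ∑ p ∈ T, ∑ m ∈ Finset.range n, ∑ q ∈ Finset.range n,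
          gap y m * ((if p ≤ m ∧ m < q then b p q else 0) - (if q ≤ m ∧ m < p then b p q else 0)) := by
        exact Finset.sum_congr rfl fun p _ => Finset.sum_comm
    _ = ∑ m ∈ Finset.range n, ∑ p ∈ T, ∑ q ∈ Finset.range n,
          gap y m * ((if p ≤ m ∧ m < q then b p q else 0) - (if q ≤ m ∧ m < p then b p q else 0)) := by
        exact Finset.sum_comm
    _ = ∑ m ∈ Finset.range n, gap y m * (uS n b T m - dS n b T m) := by
        apply Finset.sum_congr rfl
        intro m _
        unfold uS dS
        rw [← Finset.sum_sub_distrib, Finset.mul_sum]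
        apply Finset.sum_congr rfl
        intro p _
        rw [← Finset.sum_sub_distrib, Finset.mul_sum]

variable {n : ℕ} {b : ℕ → ℕ → ℝ} {y : ℕ → ℝ} {α β : ℝ}

lemma gap_nonneg (hmono : Monotone y) (m : ℕ) : 0 ≤ gap y m :=
  sub_nonneg.mpr (hmono (Nat.le_succ m))

lemma uS_nonneg (hb : ∀ p q, 0 ≤ b p q) (T : Finset ℕ) (m : ℕ) : 0 ≤ uS n b T m :=
  Finset.sum_nonneg fun p _ => Finset.sum_nonneg fun q _ => by
    split_ifs; exacts [hb p q, le_refl 0]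

lemma dS_nonneg (hb : ∀ p q, 0 ≤ b p q) (T : Finset ℕ) (m : ℕ) : 0 ≤ dS n b T m :=
  Finset.sum_nonneg fun p _ => Finset.sum_nonneg fun q _ => by
    split_ifs; exacts [hb p q, le_refl 0]

lemma uS_le_UU (hb : ∀ p q, 0 ≤ b p q) {T : Finset ℕ} (hT : T ⊆ Finset.range n) (m : ℕ) :
    uS n b T m ≤ UU n b m := by
  apply Finset.sum_le_sum_of_subset_of_nonneg hT
  intro p _ _
  exact Finset.sum_nonneg fun q _ => by split_ifs; exacts [hb p q, le_refl 0]

lemma dS_le_DD (hb : ∀ p q, 0 ≤ b p q) {T : Finset ℕ} (hT : T ⊆ Finset.range n) (m : ℕ) :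
    dS n b T m ≤ DD n b m := by
  apply Finset.sum_le_sum_of_subset_of_nonneg hT
  intro p _ _
  exact Finset.sum_nonneg fun q _ => by split_ifs; exacts [hb p q, le_refl 0]

/-- Inner row partial sum bound: for `p < n`, sum of off-diagonal selected entries is `≤ 1 - β`. -/
lemma inner_le (hb : ∀ p q, 0 ≤ b p q) (hrow : ∀ p < n, ∑ q ∈ Finset.range n, b p q = 1)
    (hdiag : ∀ p < n, β ≤ b p p) {p m : ℕ} (hp : p < n) (hmp : m < p) :
    (∑ q ∈ Finset.range n, if q ≤ m ∧ m < p then b p q else 0) ≤ 1 - β := by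
  have h1 : (∑ q ∈ Finset.range n, if q ≤ m ∧ m < p then b p q else 0)
      ≤ ∑ q ∈ (Finset.range n).erase p, b p q := by
    rw [← Finset.sum_filter]
    apply Finset.sum_le_sum_of_subset_of_nonneg
    · intro q hq
      simp only [Finset.mem_filter, Finset.mem_range, Finset.mem_erase] at hq ⊢
      exact ⟨by omega, hq.1⟩
    · intro q _ _; exact hb p q
  have h2 : ∑ q ∈ (Finset.range n).erase p, b p q
      = (∑ q ∈ Finset.range n, b p q) - b p p := by
    rw [Finset.sum_erase_eq_sub (Finset.mem_range.mpr hp)]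
  rw [h2, hrow p hp] at h1
  linarith [hdiag p hp]

lemma dS_le_card (hb : ∀ p q, 0 ≤ b p q) (hrow : ∀ p < n, ∑ q ∈ Finset.range n, b p q = 1)
    (hdiag : ∀ p < n, β ≤ b p p) {T : Finset ℕ} (hT : T ⊆ Finset.range n) (m : ℕ) :
    dS n b T m ≤ (1 - β) * ((T.filter (fun p => m < p)).card : ℝ) := by
  unfold dS
  rw [← Finset.sum_filter_add_sum_filter_not T (fun p => m < p)]
  have h2 : ∑ p ∈ T.filter (fun p => ¬ m < p), (∑ q ∈ Finset.range n, if q ≤ m ∧ m < p then b p q else 0) = 0 := by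
    apply Finset.sum_eq_zero
    intro p hp
    simp only [Finset.mem_filter] at hp
    apply Finset.sum_eq_zero
    intro q _
    have : ¬ (q ≤ m ∧ m < p) := by omega
    simp [this]
  rw [h2, add_zero]
  calc ∑ p ∈ T.filter (fun p => m < p), (∑ q ∈ Finset.range n, if q ≤ m ∧ m < p then b p q else 0)
      ≤ ∑ p ∈ T.filter (fun p => m < p), (1 - β) := by
        apply Finset.sum_le_sum
        intro p hp
        simp only [Finset.mem_filter] at hp
        exact inner_le hb hrow hdiag (Finset.mem_range.mp (hT hp.1)) hp.2
    _ = (1 - β) * ((T.filter (fun p => m < p)).card : ℝ) := by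
        rw [Finset.sum_const, nsmul_eq_mul, mul_comm]

lemma DD_le_n (hb : ∀ p q, 0 ≤ b p q) (hrow : ∀ p < n, ∑ q ∈ Finset.range n, b p q = 1)
    (m : ℕ) : DD n b m ≤ (n : ℝ) := by
  unfold DD dS
  calc ∑ p ∈ Finset.range n, (∑ q ∈ Finset.range n, if q ≤ m ∧ m < p then b p q else 0)
      ≤ ∑ p ∈ Finset.range n, (1 : ℝ) := by
        apply Finset.sum_le_sum
        intro p hp
        have hp' := Finset.mem_range.mp hp
        calc (∑ q ∈ Finset.range n, if q ≤ m ∧ m < p then b p q else 0)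
            ≤ ∑ q ∈ Finset.range n, b p q := by
              apply Finset.sum_le_sum
              intro q _
              split_ifs
              · exact le_refl _
              · exact hb p q
          _ = 1 := hrow p hp'
    _ = (n : ℝ) := by simp

lemma UU_le_n (hb : ∀ p q, 0 ≤ b p q) (hrow : ∀ p < n, ∑ q ∈ Finset.range n, b p q = 1)
    (m : ℕ) : UU n b m ≤ (n : ℝ) := by
  unfold UU uS
  calc ∑ p ∈ Finset.range n, (∑ q ∈ Finset.range n, if p ≤ m ∧ m < q then b p q else 0)
      ≤ ∑ p ∈ Finset.range n, (1 : ℝ) := by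
        apply Finset.sum_le_sum
        intro p hp
        have hp' := Finset.mem_range.mp hp
        calc (∑ q ∈ Finset.range n, if p ≤ m ∧ m < q then b p q else 0)
            ≤ ∑ q ∈ Finset.range n, b p q := by
              apply Finset.sum_le_sum
              intro q _
              split_ifs
              · exact le_refl _
              · exact hb p q
          _ = 1 := hrow p hp'
    _ = (n : ℝ) := by simp

lemma DD_le_K_UU (hα : 0 < α) (hb : ∀ p q, 0 ≤ b p q)
    (hrow : ∀ p < n, ∑ q ∈ Finset.range n, b p q = 1)
    (hlbN : ∀ p q, p < n → q < n → 0 < b p q → α ≤ b p q)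
    (hpat : ∀ m, (∃ p q, p ≤ m ∧ m < q ∧ q < n ∧ 0 < b q p) →
      (∃ p q, p ≤ m ∧ m < q ∧ q < n ∧ 0 < b p q))
    (m : ℕ) : DD n b m ≤ ((n : ℝ)/α) * UU n b m := by
  rcases le_or_gt (DD n b m) 0 with h | h
  · have hU : 0 ≤ UU n b m := uS_nonneg hb _ m
    have : 0 ≤ ((n : ℝ)/α) * UU n b m := mul_nonneg (by positivity) hU
    linarith
  · -- a positive down entry exists
    obtain ⟨p, hp, hpne⟩ : ∃ p ∈ Finset.range n,
        (∑ q ∈ Finset.range n, if q ≤ m ∧ m < p then b p q else 0) ≠ 0 := by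
      by_contra hcon
      push_neg at hcon
      have : DD n b m = 0 := Finset.sum_eq_zero hcon
      rw [this] at h; exact lt_irrefl 0 h
    obtain ⟨q, hq, hqne⟩ : ∃ q ∈ Finset.range n,
        (if q ≤ m ∧ m < p then b p q else 0) ≠ 0 := by
      by_contra hcon
      push_neg at hcon
      exact hpne (Finset.sum_eq_zero hcon)
    have hcond : q ≤ m ∧ m < p := by
      by_contra hc; simp [hc] at hqne
    rw [if_pos hcond] at hqne
    have hbpq : 0 < b p q := lt_of_le_of_ne (hb p q) (Ne.symm hqne)
    have hdown : ∃ p' q', p' ≤ m ∧ m < q' ∧ q' < n ∧ 0 < b q' p' :=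
      ⟨q, p, hcond.1, hcond.2, Finset.mem_range.mp hp, hbpq⟩
    obtain ⟨p₁, q₁, hp₁, hq₁, hq₁n, hbu⟩ := hpat m hdown
    have hαle : α ≤ b p₁ q₁ := hlbN p₁ q₁ (by omega) hq₁n hbu
    have hUge : α ≤ UU n b m := by
      unfold UU uS
      calc α ≤ b p₁ q₁ := hαle
        _ = (if p₁ ≤ m ∧ m < q₁ then b p₁ q₁ else 0) := by rw [if_pos ⟨hp₁, hq₁⟩]
        _ ≤ ∑ q ∈ Finset.range n, if p₁ ≤ m ∧ m < q then b p₁ q else 0 := by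
            apply Finset.single_le_sum (f := fun q => if p₁ ≤ m ∧ m < q then b p₁ q else 0)
            · intro q _; split_ifs; exacts [hb p₁ q, le_refl 0]
            · exact Finset.mem_range.mpr hq₁n
        _ ≤ ∑ p ∈ Finset.range n, ∑ q ∈ Finset.range n, if p ≤ m ∧ m < q then b p q else 0 := by
            apply Finset.single_le_sum
              (f := fun p => ∑ q ∈ Finset.range n, if p ≤ m ∧ m < q then b p q else 0)
            · intro p _
              exact Finset.sum_nonneg fun q _ => by split_ifs; exacts [hb p q, le_refl 0]
            · exact Finset.mem_range.mpr (by omega)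
    calc DD n b m ≤ (n : ℝ) := DD_le_n hb hrow m
      _ = ((n:ℝ)/α) * α := by field_simp
      _ ≤ ((n:ℝ)/α) * UU n b m := by
          apply mul_le_mul_of_nonneg_left hUge (by positivity)


lemma tele' (y : ℕ → ℝ) {c p : ℕ} (h : c ≤ p) :
    ∑ m ∈ Finset.Ico c p, gap y m = y p - y c := by
  unfold gap
  rw [Finset.sum_Ico_eq_sub _ h, Finset.sum_range_sub (fun k => y k),
    Finset.sum_range_sub (fun k => y k)]
  ring

lemma excess_ge (hmono : Monotone y) {T : Finset ℕ} (hT : T ⊆ Finset.range n) {c : ℕ}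
    (hcard : T.card = c+1) :
    ∑ m ∈ Finset.Ico c n, gap y m * ((T.filter (fun p => m < p)).card : ℝ)
      ≤ ∑ p ∈ T, y p - ∑ p ∈ Finset.range (c+1), y p := by
  set R := Finset.range (c+1) with hR
  have hsplitT : ∑ p ∈ T ∩ R, y p + ∑ p ∈ T \ R, y p = ∑ p ∈ T, y p :=
    Finset.sum_inter_add_sum_sdiff T R y
  have hsplitR : ∑ p ∈ R ∩ T, y p + ∑ p ∈ R \ T, y p = ∑ p ∈ R, y p :=
    Finset.sum_inter_add_sum_sdiff R T y
  have hcardTR : (T ∩ R).card + (T \ R).card = T.card := Finset.card_inter_add_card_sdiff T R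
  have hcardRT : (R ∩ T).card + (R \ T).card = R.card := Finset.card_inter_add_card_sdiff R T
  have hicomm : R ∩ T = T ∩ R := Finset.inter_comm R T
  have hcardR : R.card = c + 1 := Finset.card_range (c+1)
  have hcards : (T \ R).card = (R \ T).card := by
    rw [hicomm] at hcardRT; omega
  -- each element of R \ T is ≤ c
  have hyc : ∑ p ∈ R \ T, y p ≤ ((R \ T).card : ℝ) * y c := by
    calc ∑ p ∈ R \ T, y p ≤ ∑ p ∈ R \ T, y c := by
          apply Finset.sum_le_sum
          intro p hp
          have : p < c + 1 := Finset.mem_range.mp (Finset.mem_sdiff.mp hp).1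
          exact hmono (by omega)
      _ = ((R \ T).card : ℝ) * y c := by rw [Finset.sum_const, nsmul_eq_mul]
  -- telescoping for elements of T \ R
  have htel : ∑ p ∈ T \ R, (y p - y c)
      = ∑ m ∈ Finset.Ico c n, gap y m * (((T \ R).filter (fun p => m < p)).card : ℝ) := by
    have h1 : ∀ p ∈ T \ R, y p - y c = ∑ m ∈ Finset.Ico c n, (if m < p then gap y m else 0) := by
      intro p hp
      have hpc : c + 1 ≤ p := by
        have h2 := (Finset.mem_sdiff.mp hp).2
        rw [hR] at h2
        have := (Finset.mem_sdiff.mp hp).1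
        simp only [Finset.mem_range] at h2
        omega
      have hpn : p ≤ n := le_of_lt (Finset.mem_range.mp (hT (Finset.mem_sdiff.mp hp).1))
      rw [← Finset.sum_filter]
      have : (Finset.Ico c n).filter (fun m => m < p) = Finset.Ico c p := by
        ext m; simp only [Finset.mem_filter, Finset.mem_Ico]; omega
      rw [this, tele' y (by omega)]
    rw [Finset.sum_congr rfl h1, Finset.sum_comm]
    apply Finset.sum_congr rfl
    intro m _
    rw [← Finset.sum_filter, Finset.sum_const, nsmul_eq_mul, mul_comm]
  have hfilter_eq : ∀ m ∈ Finset.Ico c n,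
      ((T \ R).filter (fun p => m < p)).card = (T.filter (fun p => m < p)).card := by
    intro m hm
    have hcm : c ≤ m := (Finset.mem_Ico.mp hm).1
    congr 1
    ext p
    simp only [Finset.mem_filter, Finset.mem_sdiff, hR, Finset.mem_range]
    constructor
    · rintro ⟨⟨h1, _⟩, h3⟩; exact ⟨h1, h3⟩
    · rintro ⟨h1, h3⟩; exact ⟨⟨h1, by omega⟩, h3⟩
  calc ∑ m ∈ Finset.Ico c n, gap y m * ((T.filter (fun p => m < p)).card : ℝ)
      = ∑ m ∈ Finset.Ico c n, gap y m * (((T \ R).filter (fun p => m < p)).card : ℝ) := by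
        apply Finset.sum_congr rfl
        intro m hm
        rw [hfilter_eq m hm]
    _ = ∑ p ∈ T \ R, (y p - y c) := htel.symm
    _ = ∑ p ∈ T \ R, y p - ((T \ R).card : ℝ) * y c := by
        rw [Finset.sum_sub_distrib, Finset.sum_const, nsmul_eq_mul]
    _ ≤ ∑ p ∈ T \ R, y p - ∑ p ∈ R \ T, y p := by
        rw [hcards]
        linarith [hyc]
    _ = ∑ p ∈ T, y p - ∑ p ∈ R, y p := by
        rw [← hsplitT, ← hsplitR, hicomm]
        ring

lemma key_identity_abs (hmono : Monotone y) (hb : ∀ p q, 0 ≤ b p q) :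
    ∑ p ∈ Finset.range n, ∑ q ∈ Finset.range n, b p q * |y q - y p|
      = ∑ m ∈ Finset.range n, gap y m * (UU n b m + DD n b m) := by
  have step : ∀ p ∈ Finset.range n, ∀ q ∈ Finset.range n,
      b p q * |y q - y p| = ∑ m ∈ Finset.range n,
        gap y m * ((if p ≤ m ∧ m < q then b p q else 0) + (if q ≤ m ∧ m < p then b p q else 0)) := by
    intro p hp q hq
    have hp' : p ≤ n := le_of_lt (Finset.mem_range.mp hp)
    have hq' : q ≤ n := le_of_lt (Finset.mem_range.mp hq)
    have habs : |y q - y p| = (∑ m ∈ Finset.range n, if p ≤ m ∧ m < q then gap y m else 0)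
        + (∑ m ∈ Finset.range n, if q ≤ m ∧ m < p then gap y m else 0) := by
      rcases le_total p q with h | h
      · rw [sum_ite_Ico y hq' h, sum_ite_empty y h, abs_of_nonneg (by linarith [hmono h])]
        ring
      · rw [sum_ite_Ico y hp' h, sum_ite_empty y h, abs_of_nonpos (by linarith [hmono h])]
        ring
    rw [habs, mul_add, Finset.mul_sum, Finset.mul_sum, ← Finset.sum_add_distrib]
    apply Finset.sum_congr rfl
    intro m _
    split_ifs <;> ring
  calc ∑ p ∈ Finset.range n, ∑ q ∈ Finset.range n, b p q * |y q - y p|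
      = ∑ p ∈ Finset.range n, ∑ q ∈ Finset.range n, ∑ m ∈ Finset.range n,
          gap y m * ((if p ≤ m ∧ m < q then b p q else 0) + (if q ≤ m ∧ m < p then b p q else 0)) := by
        exact Finset.sum_congr rfl fun p hp => Finset.sum_congr rfl fun q hq => step p hp q hq
    _ = ∑ p ∈ Finset.range n, ∑ m ∈ Finset.range n, ∑ q ∈ Finset.range n,
          gap y m * ((if p ≤ m ∧ m < q then b p q else 0) + (if q ≤ m ∧ m < p then b p q else 0)) := by
        exact Finset.sum_congr rfl fun p _ => Finset.sum_comm
    _ = ∑ m ∈ Finset.range n, ∑ p ∈ Finset.range n, ∑ q ∈ Finset.range n,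
          gap y m * ((if p ≤ m ∧ m < q then b p q else 0) + (if q ≤ m ∧ m < p then b p q else 0)) := by
        exact Finset.sum_comm
    _ = ∑ m ∈ Finset.range n, gap y m * (UU n b m + DD n b m) := by
        apply Finset.sum_congr rfl
        intro m _
        unfold UU DD uS dS
        rw [← Finset.sum_add_distrib, Finset.mul_sum]
        apply Finset.sum_congr rfl
        intro p _
        rw [← Finset.sum_add_distrib, Finset.mul_sum]

lemma UU_pos_elim (hb : ∀ p q, 0 ≤ b p q)
    (hlbN : ∀ p q, p < n → q < n → 0 < b p q → α ≤ b p q)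
    {m : ℕ} (h : 0 < UU n b m) :
    ∃ p q, p ≤ m ∧ m < q ∧ q < n ∧ p < n ∧ α ≤ b p q := by
  obtain ⟨p, hp, hpne⟩ : ∃ p ∈ Finset.range n,
      (∑ q ∈ Finset.range n, if p ≤ m ∧ m < q then b p q else 0) ≠ 0 := by
    by_contra hcon
    push_neg at hcon
    have : UU n b m = 0 := Finset.sum_eq_zero hcon
    rw [this] at h; exact lt_irrefl 0 h
  obtain ⟨q, hq, hqne⟩ : ∃ q ∈ Finset.range n,
      (if p ≤ m ∧ m < q then b p q else 0) ≠ 0 := by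
    by_contra hcon
    push_neg at hcon
    exact hpne (Finset.sum_eq_zero hcon)
  have hcond : p ≤ m ∧ m < q := by
    by_contra hc; simp [hc] at hqne
  rw [if_pos hcond] at hqne
  have hbpq : 0 < b p q := lt_of_le_of_ne (hb p q) (Ne.symm hqne)
  exact ⟨p, q, hcond.1, hcond.2, Finset.mem_range.mp hq, Finset.mem_range.mp hp,
    hlbN p q (Finset.mem_range.mp hp) (Finset.mem_range.mp hq) hbpq⟩

/-- The crux single-step inequality for the bottom-(c+1) sum. -/
lemma crux (hα : 0 < α) (hβ : 0 < β) (hβ1 : β ≤ 1) (hαβ : α ≤ 1)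
    (hb : ∀ p q, 0 ≤ b p q)
    (hrow : ∀ p < n, ∑ q ∈ Finset.range n, b p q = 1)
    (hdiag : ∀ p < n, β ≤ b p p)
    (hlbN : ∀ p q, p < n → q < n → 0 < b p q → α ≤ b p q)
    (hpat : ∀ m, (∃ p q, p ≤ m ∧ m < q ∧ q < n ∧ 0 < b q p) →
      (∃ p q, p ≤ m ∧ m < q ∧ q < n ∧ 0 < b p q))
    (hmono : Monotone y)
    {y' : ℕ → ℝ} (hy' : ∀ p < n, y' p = ∑ q ∈ Finset.range n, b p q * y q)
    {T : Finset ℕ} (hT : T ⊆ Finset.range n) {c : ℕ} (hc : c < n) (hcard : T.card = c+1) :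
    ∑ p ∈ Finset.range (c+1), y p + (min α β / n) * (UU n b c * gap y c)
      - ((n:ℝ)/α) * ∑ m ∈ Finset.range c, UU n b m * gap y m ≤ ∑ p ∈ T, y' p := by
  have hn : 0 < n := by omega
  -- Step 1: decompose the new sum
  have hpointwise : ∀ p ∈ T, y' p = y p + ∑ q ∈ Finset.range n, b p q * (y q - y p) := by
    intro p hp
    have hp' : p < n := Finset.mem_range.mp (hT hp)
    rw [hy' p hp']
    have h1 : ∑ q ∈ Finset.range n, b p q * y q
        = ∑ q ∈ Finset.range n, (b p q * (y q - y p) + b p q * y p) := by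
      apply Finset.sum_congr rfl; intro q _; ring
    rw [h1, Finset.sum_add_distrib, ← Finset.sum_mul, hrow p hp']
    ring
  have hsum : ∑ p ∈ T, y' p = ∑ p ∈ T, y p
      + ∑ m ∈ Finset.range n, gap y m * (uS n b T m - dS n b T m) := by
    rw [Finset.sum_congr rfl hpointwise, Finset.sum_add_distrib, key_identity n b y T hT]
  -- abbreviations
  set K : ℝ := (n : ℝ)/α with hK
  have hK0 : 0 ≤ K := by positivity
  set E : ℝ := ∑ p ∈ T, y p - ∑ p ∈ Finset.range (c+1), y p with hE
  set E' : ℝ := ∑ m ∈ Finset.Ico c n, gap y m * ((T.filter (fun p => m < p)).card : ℝ) with hE'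
  have hEE' : E' ≤ E := excess_ge hmono hT hcard
  have hE'0 : 0 ≤ E' := Finset.sum_nonneg fun m _ =>
    mul_nonneg (gap_nonneg hmono m) (Nat.cast_nonneg _)
  set H : ℝ := ∑ m ∈ Finset.Ico c n, gap y m * uS n b T m with hH
  have hH0 : 0 ≤ H := Finset.sum_nonneg fun m _ =>
    mul_nonneg (gap_nonneg hmono m) (uS_nonneg hb T m)
  -- split
  have hsplit : ∑ m ∈ Finset.range c, gap y m * (uS n b T m - dS n b T m)
      + ∑ m ∈ Finset.Ico c n, gap y m * (uS n b T m - dS n b T m)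
      = ∑ m ∈ Finset.range n, gap y m * (uS n b T m - dS n b T m) :=
    Finset.sum_range_add_sum_Ico _ (le_of_lt hc)
  -- lower bound on the low part
  have hlow : -(K * ∑ m ∈ Finset.range c, UU n b m * gap y m)
      ≤ ∑ m ∈ Finset.range c, gap y m * (uS n b T m - dS n b T m) := by
    have hpt : ∀ m ∈ Finset.range c, -(K * (UU n b m * gap y m))
        ≤ gap y m * (uS n b T m - dS n b T m) := by
      intro m _
      have hg := gap_nonneg hmono m
      have hu := uS_nonneg (n := n) hb T m
      have hd : dS n b T m ≤ K * UU n b m :=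
        le_trans (dS_le_DD hb hT m) (DD_le_K_UU hα hb hrow hlbN hpat m)
      nlinarith [mul_le_mul_of_nonneg_left hd hg, mul_nonneg hg hu]
    calc -(K * ∑ m ∈ Finset.range c, UU n b m * gap y m)
        = ∑ m ∈ Finset.range c, -(K * (UU n b m * gap y m)) := by
          rw [Finset.mul_sum, ← Finset.sum_neg_distrib]
      _ ≤ ∑ m ∈ Finset.range c, gap y m * (uS n b T m - dS n b T m) :=
          Finset.sum_le_sum hpt
  -- lower bound on the high part
  have hhigh : H - (1-β) * E'
      ≤ ∑ m ∈ Finset.Ico c n, gap y m * (uS n b T m - dS n b T m) := by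
    have hpt : ∀ m ∈ Finset.Ico c n,
        gap y m * uS n b T m - (1-β) * (gap y m * ((T.filter (fun p => m < p)).card : ℝ))
        ≤ gap y m * (uS n b T m - dS n b T m) := by
      intro m _
      have hg := gap_nonneg hmono m
      have hd : dS n b T m ≤ (1-β) * ((T.filter (fun p => m < p)).card : ℝ) :=
        dS_le_card hb hrow hdiag hT m
      nlinarith [mul_le_mul_of_nonneg_left hd hg]
    calc H - (1-β) * E'
        = ∑ m ∈ Finset.Ico c n, (gap y m * uS n b T m
            - (1-β) * (gap y m * ((T.filter (fun p => m < p)).card : ℝ))) := by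
          rw [Finset.sum_sub_distrib, ← Finset.mul_sum]
      _ ≤ ∑ m ∈ Finset.Ico c n, gap y m * (uS n b T m - dS n b T m) :=
          Finset.sum_le_sum hpt
  -- the key gain claim
  have hU0 : 0 ≤ UU n b c := uS_nonneg (n := n) hb _ c
  have hgc := gap_nonneg hmono c
  have hmin0 : (0:ℝ) ≤ min α β / n := by positivity
  have hclaim : (min α β / n) * (UU n b c * gap y c) ≤ β * E' + H := by
    rcases eq_or_lt_of_le hU0 with h0 | hUpos
    · rw [← h0]
      simp only [zero_mul, mul_zero]
      have : 0 ≤ β * E' := mul_nonneg (le_of_lt hβ) hE'0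
      linarith
    · obtain ⟨ps, qs, hpm, hmq, hqn, hpn, hab⟩ := UU_pos_elim hb hlbN hUpos
      have hUn : UU n b c ≤ (n:ℝ) := UU_le_n hb hrow c
      have hLHS : (min α β / n) * (UU n b c * gap y c) ≤ min α β * gap y c := by
        have h1 : UU n b c * gap y c ≤ (n:ℝ) * gap y c :=
          mul_le_mul_of_nonneg_right hUn hgc
        calc (min α β / n) * (UU n b c * gap y c) ≤ (min α β / n) * ((n:ℝ) * gap y c) :=
              mul_le_mul_of_nonneg_left h1 hmin0
          _ = min α β * gap y c := by
              field_simp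
      by_cases hmem : ps ∈ T
      · -- the gain comes from the up-edge inside T
        have hb1 : b ps qs ≤ uS n b T c := by
          calc b ps qs = (if ps ≤ c ∧ c < qs then b ps qs else 0) := (if_pos ⟨hpm, hmq⟩).symm
            _ ≤ ∑ q ∈ Finset.range n, if ps ≤ c ∧ c < q then b ps q else 0 := by
                apply Finset.single_le_sum (f := fun q => if ps ≤ c ∧ c < q then b ps q else 0)
                · intro q _; split_ifs; exacts [hb ps q, le_refl 0]
                · exact Finset.mem_range.mpr hqn
            _ ≤ uS n b T c := by
                apply Finset.single_le_sum
                  (f := fun p => ∑ q ∈ Finset.range n, if p ≤ c ∧ c < q then b p q else 0)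
                · intro p _
                  exact Finset.sum_nonneg fun q _ => by split_ifs; exacts [hb p q, le_refl 0]
                · exact hmem
        have h2 : gap y c * uS n b T c ≤ H := by
          apply Finset.single_le_sum (f := fun m => gap y m * uS n b T m)
          · intro m _; exact mul_nonneg (gap_nonneg hmono m) (uS_nonneg hb T m)
          · exact Finset.mem_Ico.mpr ⟨le_refl c, hc⟩
        have h3 : min α β * gap y c ≤ gap y c * b ps qs := by
          have : min α β ≤ b ps qs := le_trans (min_le_left α β) hab
          nlinarith
        have h4 : gap y c * b ps qs ≤ gap y c * uS n b T c :=
          mul_le_mul_of_nonneg_left hb1 hgc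
        have h5 : 0 ≤ β * E' := mul_nonneg (le_of_lt hβ) hE'0
        linarith
      · -- some element of T lies above level c
        have hNc : 1 ≤ ((T.filter (fun p => c < p)).card : ℝ) := by
          have hne : (T.filter (fun p => c < p)).Nonempty := by
            by_contra hcon
            rw [Finset.not_nonempty_iff_eq_empty, Finset.filter_eq_empty_iff] at hcon
            have hsub : T ⊆ Finset.range (c+1) := by
              intro p hp
              have := hcon hp
              exact Finset.mem_range.mpr (by omega)
            have hTeq : T = Finset.range (c+1) := by
              apply Finset.eq_of_subset_of_card_le hsub
              rw [Finset.card_range, hcard]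
            apply hmem
            rw [hTeq]
            exact Finset.mem_range.mpr (by omega)
          have := Finset.card_pos.mpr hne
          exact_mod_cast this
        have h2 : gap y c * ((T.filter (fun p => c < p)).card : ℝ) ≤ E' := by
          apply Finset.single_le_sum
            (f := fun m => gap y m * ((T.filter (fun p => m < p)).card : ℝ))
          · intro m _; exact mul_nonneg (gap_nonneg hmono m) (Nat.cast_nonneg _)
          · exact Finset.mem_Ico.mpr ⟨le_refl c, hc⟩
        have h3 : gap y c ≤ gap y c * ((T.filter (fun p => c < p)).card : ℝ) := by
          have h3' := mul_le_mul_of_nonneg_left hNc hgc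
          linarith
        have h4 : min α β * gap y c ≤ β * gap y c :=
          mul_le_mul_of_nonneg_right (min_le_right α β) hgc
        have h5 : β * gap y c ≤ β * E' := by
          apply mul_le_mul_of_nonneg_left _ (le_of_lt hβ)
          linarith
        linarith
  -- assemble
  have := hsum
  rw [← hsplit] at this
  linarith

/-- One-step movement bound. -/
lemma move_bound (hα : 0 < α) (hb : ∀ p q, 0 ≤ b p q)
    (hrow : ∀ p < n, ∑ q ∈ Finset.range n, b p q = 1)
    (hlbN : ∀ p q, p < n → q < n → 0 < b p q → α ≤ b p q)
    (hpat : ∀ m, (∃ p q, p ≤ m ∧ m < q ∧ q < n ∧ 0 < b q p) →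
      (∃ p q, p ≤ m ∧ m < q ∧ q < n ∧ 0 < b p q))
    (hmono : Monotone y) :
    ∑ p ∈ Finset.range n, ∑ q ∈ Finset.range n, b p q * |y q - y p|
      ≤ (1 + (n:ℝ)/α) * ∑ m ∈ Finset.range n, UU n b m * gap y m := by
  rw [key_identity_abs hmono hb, Finset.mul_sum]
  apply Finset.sum_le_sum
  intro m _
  have hg := gap_nonneg hmono m
  have hU := uS_nonneg (n := n) hb (Finset.range n) m
  have hD : DD n b m ≤ ((n:ℝ)/α) * UU n b m := DD_le_K_UU hα hb hrow hlbN hpat m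
  nlinarith [mul_le_mul_of_nonneg_left hD hg]

open Filter in
/-- Convergence for cut-balanced averaging dynamics (Theorem 2 of [ref12],
existence of limits). -/
theorem cut_balanced_convergence (n : ℕ) (A : ℕ → Matrix (Fin n) (Fin n) ℝ)
    (hnonneg : ∀ t i j, 0 ≤ A t i j)
    (hrow : ∀ t i, ∑ j, A t i j = 1)
    (α : ℝ) (hα : 0 < α) (hlb : ∀ t i j, 0 < A t i j → α ≤ A t i j)
    (β : ℝ) (hβ : 0 < β) (hdiag : ∀ t i, β ≤ A t i i)
    (hcb : ∀ t, ∀ S : Set (Fin n), S.Nonempty → S ≠ Set.univ →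
      ((∃ i ∈ S, ∃ j ∉ S, 0 < A t i j) ↔ (∃ i ∈ S, ∃ j ∉ S, 0 < A t j i)))
    (x : ℕ → Fin n → ℝ)
    (hx : ∀ t i, x (t+1) i = ∑ j, A t i j * x t j) :
    ∀ i, ∃ L : ℝ, Tendsto (fun t => x t i) atTop (nhds L) := by
  intro i
  rcases Nat.eq_zero_or_pos n with hn0 | hn
  · subst hn0; exact i.elim0
  -- basic entry bounds
  have hentry_le_one : ∀ t (i j : Fin n), A t i j ≤ 1 := by
    intro t i j
    have h1 : A t i j ≤ ∑ k, A t i k :=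
      Finset.single_le_sum (fun k _ => hnonneg t i k) (Finset.mem_univ j)
    rw [hrow t i] at h1; exact h1
  have hα1 : α ≤ 1 := le_trans (hlb 0 i i (lt_of_lt_of_le hβ (hdiag 0 i))) (hentry_le_one 0 i i)
  have hβ1 : β ≤ 1 := le_trans (hdiag 0 i) (hentry_le_one 0 i i)
  -- the sorting machinery
  set ι : ℕ → ℕ → Fin n := fun t p => Tuple.sort (x t) ⟨min p (n-1), by omega⟩ with hι
  have hι_lt : ∀ t p (hp : p < n), ι t p = Tuple.sort (x t) ⟨p, hp⟩ := by
    intro t p hp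
    simp only [hι]
    congr 1
    exact Fin.mk_eq_mk.mpr (by omega)
  have hιmono : ∀ t, Monotone (fun p => x t (ι t p)) := by
    intro t p q hpq
    apply Tuple.monotone_sort (x t)
    show (⟨min p (n-1), _⟩ : Fin n) ≤ ⟨min q (n-1), _⟩
    rw [Fin.mk_le_mk]
    omega
  have hιinj : ∀ t p q, p < n → q < n → ι t p = ι t q → p = q := by
    intro t p q hp hq heq
    rw [hι_lt t p hp, hι_lt t q hq] at heq
    have := (Tuple.sort (x t)).injective heq
    rw [Fin.mk_eq_mk] at this
    exact this
  have hιeq : ∀ t (j : Fin n), ι t (((Tuple.sort (x t)).symm j : Fin n) : ℕ) = j := by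
    intro t j
    rw [hι_lt t _ (((Tuple.sort (x t)).symm j).isLt)]
    simp
  have hreindex : ∀ t (f : Fin n → ℝ), ∑ p ∈ Finset.range n, f (ι t p) = ∑ j, f j := by
    intro t f
    apply Finset.sum_nbij' (i := fun p => ι t p)
      (j := fun j => (((Tuple.sort (x t)).symm j : Fin n) : ℕ))
    · intro a _; exact Finset.mem_univ _
    · intro a _; exact Finset.mem_range.mpr ((Tuple.sort (x t)).symm a).isLt
    · intro a ha
      have ha' := Finset.mem_range.mp ha
      rw [hι_lt t a ha']
      simp
    · intro a _; exact hιeq t a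
    · intro a _; rfl
  -- transported one-step data
  have hbrow : ∀ t p, p < n → ∑ q ∈ Finset.range n, A t (ι t p) (ι t q) = 1 := by
    intro t p _
    rw [hreindex t (fun j => A t (ι t p) j)]
    exact hrow t (ι t p)
  have hblb : ∀ t p q, p < n → q < n → 0 < A t (ι t p) (ι t q) → α ≤ A t (ι t p) (ι t q) := by
    intro t p q _ _ h
    exact hlb t _ _ h
  have hpatt : ∀ t m, (∃ p q, p ≤ m ∧ m < q ∧ q < n ∧ 0 < A t (ι t q) (ι t p)) →
      (∃ p q, p ≤ m ∧ m < q ∧ q < n ∧ 0 < A t (ι t p) (ι t q)) := by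
    intro t m ⟨p, q, hpm, hmq, hqn, hpos⟩
    have hpn : p < n := by omega
    set S : Set (Fin n) := {j | ∃ p', p' ≤ m ∧ p' < n ∧ ι t p' = j} with hS
    have hSne : S.Nonempty := ⟨ι t p, p, hpm, hpn, rfl⟩
    have hqS : ι t q ∉ S := by
      rintro ⟨p', hp'm, hp'n, heq⟩
      have := hιinj t p' q hp'n hqn heq
      omega
    have hSuniv : S ≠ Set.univ := by
      intro hcon
      exact hqS (hcon ▸ Set.mem_univ _)
    have hdown : ∃ i ∈ S, ∃ j ∉ S, 0 < A t j i :=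
      ⟨ι t p, ⟨p, hpm, hpn, rfl⟩, ι t q, hqS, hpos⟩
    obtain ⟨i', hi'S, j', hj'S, hpos'⟩ := (hcb t S hSne hSuniv).mpr hdown
    obtain ⟨p₁, hp₁m, hp₁n, hp₁eq⟩ := hi'S
    set q₁ : ℕ := (((Tuple.sort (x t)).symm j' : Fin n) : ℕ) with hq₁
    have hq₁n : q₁ < n := ((Tuple.sort (x t)).symm j').isLt
    have hq₁eq : ι t q₁ = j' := hιeq t j'
    have hq₁m : m < q₁ := by
      by_contra hcon
      exact hj'S ⟨q₁, by omega, hq₁n, hq₁eq⟩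
    exact ⟨p₁, q₁, hp₁m, hq₁m, hq₁n, by rw [hp₁eq, hq₁eq]; exact hpos'⟩
  have hy'eq : ∀ t p, p < n →
      x (t+1) (ι t p) = ∑ q ∈ Finset.range n, A t (ι t p) (ι t q) * x t (ι t q) := by
    intro t p _
    rw [hx t (ι t p)]
    exact (hreindex t (fun j => A t (ι t p) j * x t j)).symm
  -- the per-step inequality for bottom sums
  have hstep : ∀ t c, c < n →
      (∑ p ∈ Finset.range (c+1), x t (ι t p))
        + (min α β / n) * (UU n (fun p q => A t (ι t p) (ι t q)) c * gap (fun p => x t (ι t p)) c)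
        - ((n:ℝ)/α) * ∑ m ∈ Finset.range c,
            UU n (fun p q => A t (ι t p) (ι t q)) m * gap (fun p => x t (ι t p)) m
      ≤ ∑ p ∈ Finset.range (c+1), x (t+1) (ι (t+1) p) := by
    intro t c hc
    set J : Fin n → ℕ := fun j => (((Tuple.sort (x t)).symm j : Fin n) : ℕ) with hJ
    set T : Finset ℕ := (Finset.range (c+1)).image (fun p => J (ι (t+1) p)) with hT
    have hinj : ∀ p ∈ Finset.range (c+1), ∀ q ∈ Finset.range (c+1),
        J (ι (t+1) p) = J (ι (t+1) q) → p = q := by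
      intro p hp q hq heq
      have hp' : p < n := by have := Finset.mem_range.mp hp; omega
      have hq' : q < n := by have := Finset.mem_range.mp hq; omega
      have h1 : (Tuple.sort (x (t+1))).symm.trans (Equiv.refl _) = _ := rfl
      have h2 : ι (t+1) p = ι (t+1) q := by
        have h3 : ((Tuple.sort (x t)).symm (ι (t+1) p) : Fin n)
            = (Tuple.sort (x t)).symm (ι (t+1) q) := Fin.ext heq
        exact (Tuple.sort (x t)).symm.injective h3
      exact hιinj (t+1) p q hp' hq' h2
    have hTsub : T ⊆ Finset.range n := by
      intro a ha
      rw [hT, Finset.mem_image] at ha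
      obtain ⟨p, _, hpe⟩ := ha
      rw [← hpe]
      exact Finset.mem_range.mpr ((Tuple.sort (x t)).symm (ι (t+1) p)).isLt
    have hTcard : T.card = c + 1 := by
      rw [hT, Finset.card_image_of_injOn hinj, Finset.card_range]
    have hTsum : ∑ p ∈ T, x (t+1) (ι t p) = ∑ p ∈ Finset.range (c+1), x (t+1) (ι (t+1) p) := by
      rw [hT, Finset.sum_image hinj]
      apply Finset.sum_congr rfl
      intro p _
      rw [hJ]
      rw [hιeq t (ι (t+1) p)]
    have hcrux := crux (n := n) (b := fun p q => A t (ι t p) (ι t q))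
      (y := fun p => x t (ι t p)) (y' := fun p => x (t+1) (ι t p))
      hα hβ hβ1 hα1
      (fun p q => hnonneg t _ _) (hbrow t) (fun p hp => hdiag t _)
      (hblb t) (hpatt t) (hιmono t) (hy'eq t) hTsub hc hTcard
    rw [hTsum] at hcrux
    exact hcrux
  -- abbreviations and constants
  set V : ℕ → ℕ → ℝ := fun t m =>
    UU n (fun p q => A t (ι t p) (ι t q)) m * gap (fun p => x t (ι t p)) m with hV
  set SS : ℕ → ℕ → ℝ := fun t c => ∑ p ∈ Finset.range (c+1), x t (ι t p) with hSS
  have hVnonneg : ∀ t m, 0 ≤ V t m := by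
    intro t m
    exact mul_nonneg (uS_nonneg (n := n) (fun p q => hnonneg t _ _) _ m)
      (gap_nonneg (hιmono t) m)
  have hn1 : (1:ℝ) ≤ (n:ℝ) := by exact_mod_cast hn
  set c0 : ℝ := min α β / n with hc0
  have hminpos : 0 < min α β := lt_min hα hβ
  have hc0pos : 0 < c0 := by rw [hc0]; positivity
  have hc0le1 : c0 ≤ 1 := by
    rw [hc0, div_le_one (by linarith)]
    calc min α β ≤ α := min_le_left α β
      _ ≤ 1 := hα1
      _ ≤ (n:ℝ) := hn1
  set K : ℝ := (n:ℝ)/α with hK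
  have hKpos : 0 < K := by rw [hK]; positivity
  have hK1 : 1 ≤ K := by
    rw [hK, le_div_iff₀ hα, one_mul]
    linarith
  set ρ : ℝ := c0 / (2*K*(n:ℝ)) with hρ
  have hρpos : 0 < ρ := by rw [hρ]; positivity
  have hρ1 : ρ ≤ 1 := by
    rw [hρ, div_le_one (by positivity)]
    nlinarith
  have hρK : K * (n:ℝ) * ρ = c0/2 := by
    rw [hρ]
    field_simp
  set c1 : ℝ := (c0/2) * ρ^(n-1) with hc1
  have hc1pos : 0 < c1 := by rw [hc1]; positivity
  set Φ : ℕ → ℝ := fun t => ∑ c ∈ Finset.range n, ρ^c * SS t c with hΦ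
  set G : ℕ → ℝ := fun t => ∑ m ∈ Finset.range n, V t m with hG
  have hGnonneg : ∀ t, 0 ≤ G t := fun t => Finset.sum_nonneg fun m _ => hVnonneg t m
  have hstep' : ∀ t c, c < n →
      SS t c + c0 * V t c - K * ∑ m ∈ Finset.range c, V t m ≤ SS (t+1) c :=
    fun t c hc => hstep t c hc
  -- the potential increases by at least c1 * G t
  have hΔΦ : ∀ t, c1 * G t ≤ Φ (t+1) - Φ t := by
    intro t
    have step1 : ∑ c ∈ Finset.range n, (ρ^c * (c0 * V t c) - ρ^c * (K * ∑ m ∈ Finset.range c, V t m))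
        ≤ Φ (t+1) - Φ t := by
      rw [hΦ]
      simp only []
      rw [← Finset.sum_sub_distrib]
      apply Finset.sum_le_sum
      intro c hc
      have h1 := hstep' t c (Finset.mem_range.mp hc)
      have h2 : (0:ℝ) ≤ ρ^c := pow_nonneg hρpos.le c
      nlinarith [mul_le_mul_of_nonneg_left h1 h2]
    have hswap : ∑ c ∈ Finset.range n, ∑ m ∈ Finset.range c, ρ^c * V t m
        = ∑ m ∈ Finset.range n, ∑ c ∈ Finset.Ico (m+1) n, ρ^c * V t m := by
      calc ∑ c ∈ Finset.range n, ∑ m ∈ Finset.range c, ρ^c * V t m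
          = ∑ c ∈ Finset.range n, ∑ m ∈ Finset.range n, (if m < c then ρ^c * V t m else 0) := by
            apply Finset.sum_congr rfl
            intro c hc
            rw [← Finset.sum_filter]
            have : (Finset.range n).filter (fun m => m < c) = Finset.range c := by
              ext m
              simp only [Finset.mem_filter, Finset.mem_range]
              have := Finset.mem_range.mp hc
              omega
            rw [this]
        _ = ∑ m ∈ Finset.range n, ∑ c ∈ Finset.range n, (if m < c then ρ^c * V t m else 0) :=
            Finset.sum_comm
        _ = ∑ m ∈ Finset.range n, ∑ c ∈ Finset.Ico (m+1) n, ρ^c * V t m := by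
            apply Finset.sum_congr rfl
            intro m _
            rw [← Finset.sum_filter]
            congr 1
            ext c
            simp only [Finset.mem_filter, Finset.mem_range, Finset.mem_Ico]
            omega
    have hgeo : ∀ m, ∑ c ∈ Finset.Ico (m+1) n, ρ^c ≤ (n:ℝ) * ρ^(m+1) := by
      intro m
      calc ∑ c ∈ Finset.Ico (m+1) n, ρ^c ≤ ∑ c ∈ Finset.Ico (m+1) n, ρ^(m+1) := by
            apply Finset.sum_le_sum
            intro c hc
            exact pow_le_pow_of_le_one hρpos.le hρ1 (Finset.mem_Ico.mp hc).1
        _ = ((Finset.Ico (m+1) n).card : ℝ) * ρ^(m+1) := by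
            rw [Finset.sum_const, nsmul_eq_mul]
        _ ≤ (n:ℝ) * ρ^(m+1) := by
            apply mul_le_mul_of_nonneg_right _ (pow_nonneg hρpos.le _)
            rw [Nat.card_Ico]
            exact_mod_cast Nat.sub_le n (m+1)
    have step2 : ∑ m ∈ Finset.range n, c1 * V t m
        ≤ ∑ c ∈ Finset.range n, (ρ^c * (c0 * V t c) - ρ^c * (K * ∑ m ∈ Finset.range c, V t m)) := by
      have e1 : ∑ c ∈ Finset.range n, (ρ^c * (c0 * V t c) - ρ^c * (K * ∑ m ∈ Finset.range c, V t m))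
          = ∑ c ∈ Finset.range n, ρ^c * (c0 * V t c)
            - K * ∑ c ∈ Finset.range n, ∑ m ∈ Finset.range c, ρ^c * V t m := by
        rw [Finset.sum_sub_distrib, Finset.mul_sum]
        congr 1
        apply Finset.sum_congr rfl
        intro c _
        rw [Finset.mul_sum, Finset.mul_sum, Finset.mul_sum]
        apply Finset.sum_congr rfl
        intro m _
        ring
      rw [e1, hswap]
      have e2 : K * ∑ m ∈ Finset.range n, ∑ c ∈ Finset.Ico (m+1) n, ρ^c * V t m
          ≤ ∑ m ∈ Finset.range n, (c0/2) * (ρ^m * V t m) := by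
        rw [Finset.mul_sum]
        apply Finset.sum_le_sum
        intro m _
        have h1 : ∑ c ∈ Finset.Ico (m+1) n, ρ^c * V t m
            = (∑ c ∈ Finset.Ico (m+1) n, ρ^c) * V t m := by
          rw [Finset.sum_mul]
        rw [h1]
        have h2 : (∑ c ∈ Finset.Ico (m+1) n, ρ^c) * V t m ≤ ((n:ℝ) * ρ^(m+1)) * V t m :=
          mul_le_mul_of_nonneg_right (hgeo m) (hVnonneg t m)
        calc K * ((∑ c ∈ Finset.Ico (m+1) n, ρ^c) * V t m)
            ≤ K * (((n:ℝ) * ρ^(m+1)) * V t m) :=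
              mul_le_mul_of_nonneg_left h2 hKpos.le
          _ = (K * (n:ℝ) * ρ) * (ρ^m * V t m) := by ring
          _ = (c0/2) * (ρ^m * V t m) := by rw [hρK]
      have e3 : ∀ m ∈ Finset.range n, c1 * V t m
          ≤ ρ^m * (c0 * V t m) - (c0/2) * (ρ^m * V t m) := by
        intro m hm
        have hm' : m ≤ n - 1 := by have := Finset.mem_range.mp hm; omega
        have h1 : ρ^(n-1) ≤ ρ^m := pow_le_pow_of_le_one hρpos.le hρ1 hm'
        have h2 : ρ^m * (c0 * V t m) - (c0/2) * (ρ^m * V t m) = (c0/2) * ρ^m * V t m := by ring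
        rw [h2, hc1]
        exact mul_le_mul_of_nonneg_right
          (mul_le_mul_of_nonneg_left h1 (by positivity : (0:ℝ) ≤ c0/2)) (hVnonneg t m)
      calc ∑ m ∈ Finset.range n, c1 * V t m
          ≤ ∑ m ∈ Finset.range n, (ρ^m * (c0 * V t m) - (c0/2) * (ρ^m * V t m)) :=
            Finset.sum_le_sum e3
        _ = ∑ m ∈ Finset.range n, ρ^m * (c0 * V t m) - ∑ m ∈ Finset.range n, (c0/2) * (ρ^m * V t m) := by
            rw [Finset.sum_sub_distrib]
        _ ≤ ∑ m ∈ Finset.range n, ρ^m * (c0 * V t m)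
            - K * ∑ m ∈ Finset.range n, ∑ c ∈ Finset.Ico (m+1) n, ρ^c * V t m := by
            linarith [e2]
    calc c1 * G t = ∑ m ∈ Finset.range n, c1 * V t m := by rw [hG]; exact Finset.mul_sum _ _ _
      _ ≤ ∑ c ∈ Finset.range n, (ρ^c * (c0 * V t c) - ρ^c * (K * ∑ m ∈ Finset.range c, V t m)) := step2
      _ ≤ Φ (t+1) - Φ t := step1
  -- uniform bound on the state
  set B : ℝ := ∑ j, |x 0 j| with hBdef
  have hB0 : 0 ≤ B := Finset.sum_nonneg fun j _ => abs_nonneg _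
  have hB : ∀ t (j : Fin n), |x t j| ≤ B := by
    intro t
    induction t with
    | zero =>
      intro j
      rw [hBdef]
      exact Finset.single_le_sum (f := fun k => |x 0 k|) (fun k _ => abs_nonneg _)
        (Finset.mem_univ j)
    | succ t ih =>
      intro j
      rw [hx t j]
      calc |∑ k, A t j k * x t k| ≤ ∑ k, |A t j k * x t k| := Finset.abs_sum_le_sum_abs _ _
        _ = ∑ k, A t j k * |x t k| := by
            apply Finset.sum_congr rfl
            intro k _
            rw [abs_mul, abs_of_nonneg (hnonneg t j k)]
        _ ≤ ∑ k, A t j k * B := by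
            apply Finset.sum_le_sum
            intro k _
            exact mul_le_mul_of_nonneg_left (ih k) (hnonneg t j k)
        _ = B := by rw [← Finset.sum_mul, hrow t j, one_mul]
  have hSSbd : ∀ t c, c < n → |SS t c| ≤ (n:ℝ) * B := by
    intro t c hc
    rw [hSS]
    calc |∑ p ∈ Finset.range (c+1), x t (ι t p)|
        ≤ ∑ p ∈ Finset.range (c+1), |x t (ι t p)| := Finset.abs_sum_le_sum_abs _ _
      _ ≤ ∑ p ∈ Finset.range (c+1), B := Finset.sum_le_sum (fun p _ => hB t (ι t p))
      _ = ((c+1 : ℕ) : ℝ) * B := by rw [Finset.sum_const, Finset.card_range, nsmul_eq_mul]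
      _ ≤ (n:ℝ) * B := by
          apply mul_le_mul_of_nonneg_right _ hB0
          exact_mod_cast hc
  set M : ℝ := (n:ℝ) * ((n:ℝ) * B) with hM
  have hΦbd : ∀ t, |Φ t| ≤ M := by
    intro t
    rw [hΦ, hM]
    calc |∑ c ∈ Finset.range n, ρ^c * SS t c|
        ≤ ∑ c ∈ Finset.range n, |ρ^c * SS t c| := Finset.abs_sum_le_sum_abs _ _
      _ ≤ ∑ c ∈ Finset.range n, (n:ℝ) * B := by
          apply Finset.sum_le_sum
          intro c hc
          rw [abs_mul, abs_of_nonneg (pow_nonneg hρpos.le c)]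
          calc ρ^c * |SS t c| ≤ 1 * ((n:ℝ)*B) := by
                apply mul_le_mul (pow_le_one₀ hρpos.le hρ1) (hSSbd t c (Finset.mem_range.mp hc))
                  (abs_nonneg _) zero_le_one
            _ = (n:ℝ)*B := one_mul _
      _ = (n:ℝ) * ((n:ℝ) * B) := by
          rw [Finset.sum_const, Finset.card_range, nsmul_eq_mul]
  -- summability of mixing
  have hGsumbd : ∀ τ, ∑ t ∈ Finset.range τ, G t ≤ 2*M/c1 := by
    intro τ
    have h1 : c1 * ∑ t ∈ Finset.range τ, G t ≤ Φ τ - Φ 0 := by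
      calc c1 * ∑ t ∈ Finset.range τ, G t = ∑ t ∈ Finset.range τ, c1 * G t := Finset.mul_sum _ _ _
        _ ≤ ∑ t ∈ Finset.range τ, (Φ (t+1) - Φ t) := Finset.sum_le_sum fun t _ => hΔΦ t
        _ = Φ τ - Φ 0 := Finset.sum_range_sub Φ τ
    have h2 : Φ τ - Φ 0 ≤ 2*M := by
      have := hΦbd τ
      have := hΦbd 0
      have h3 := abs_le.mp (hΦbd τ)
      have h4 := abs_le.mp (hΦbd 0)
      linarith
    rw [le_div_iff₀ hc1pos]
    linarith
  -- one-step movement bound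
  have hmove : ∀ t, |x (t+1) i - x t i| ≤ (1+K) * G t := by
    intro t
    set pi : ℕ := (((Tuple.sort (x t)).symm i : Fin n) : ℕ) with hpi
    have hpin : pi < n := ((Tuple.sort (x t)).symm i).isLt
    have hpieq : ι t pi = i := hιeq t i
    have h0 : x (t+1) i - x t i = ∑ j, A t i j * (x t j - x t i) := by
      rw [hx t i]
      rw [Finset.sum_congr rfl (fun j _ => mul_sub (A t i j) (x t j) (x t i)),
        Finset.sum_sub_distrib, ← Finset.sum_mul, hrow t i, one_mul]
    have h1 : |x (t+1) i - x t i| ≤ ∑ j, A t i j * |x t j - x t i| := by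
      rw [h0]
      calc |∑ j, A t i j * (x t j - x t i)| ≤ ∑ j, |A t i j * (x t j - x t i)| :=
            Finset.abs_sum_le_sum_abs _ _
        _ = ∑ j, A t i j * |x t j - x t i| := by
            apply Finset.sum_congr rfl
            intro j _
            rw [abs_mul, abs_of_nonneg (hnonneg t i j)]
    have h2 : ∑ j, A t i j * |x t j - x t i|
        = ∑ q ∈ Finset.range n, A t (ι t pi) (ι t q) * |x t (ι t q) - x t (ι t pi)| := by
      rw [hreindex t (fun j => A t (ι t pi) j * |x t j - x t (ι t pi)|)]
      rw [hpieq]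
    have h3 : ∑ q ∈ Finset.range n, A t (ι t pi) (ι t q) * |x t (ι t q) - x t (ι t pi)|
        ≤ ∑ p ∈ Finset.range n, ∑ q ∈ Finset.range n,
            A t (ι t p) (ι t q) * |x t (ι t q) - x t (ι t p)| := by
      apply Finset.single_le_sum
        (f := fun p => ∑ q ∈ Finset.range n, A t (ι t p) (ι t q) * |x t (ι t q) - x t (ι t p)|)
      · intro p _
        exact Finset.sum_nonneg fun q _ => mul_nonneg (hnonneg t _ _) (abs_nonneg _)
      · exact Finset.mem_range.mpr hpin
    have h4 : ∑ p ∈ Finset.range n, ∑ q ∈ Finset.range n,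
          A t (ι t p) (ι t q) * |x t (ι t q) - x t (ι t p)| ≤ (1 + K) * G t := by
      have := move_bound (n := n) (b := fun p q => A t (ι t p) (ι t q))
        (y := fun p => x t (ι t p)) hα (fun p q => hnonneg t _ _) (hbrow t)
        (hblb t) (hpatt t) (hιmono t)
      rw [hK]
      exact this
    calc |x (t+1) i - x t i| ≤ ∑ j, A t i j * |x t j - x t i| := h1
      _ = _ := h2
      _ ≤ _ := h3
      _ ≤ (1+K) * G t := h4
  -- conclude : increments are absolutely summable
  have hK0' : (0:ℝ) ≤ 1 + K := by linarith
  have habs_sum : ∀ τ, ∑ t ∈ Finset.range τ, |x (t+1) i - x t i| ≤ (1+K) * (2*M/c1) := by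
    intro τ
    calc ∑ t ∈ Finset.range τ, |x (t+1) i - x t i|
        ≤ ∑ t ∈ Finset.range τ, (1+K) * G t := Finset.sum_le_sum fun t _ => hmove t
      _ = (1+K) * ∑ t ∈ Finset.range τ, G t := (Finset.mul_sum _ _ _).symm
      _ ≤ (1+K) * (2*M/c1) := mul_le_mul_of_nonneg_left (hGsumbd τ) hK0'
  have hsummable : Summable (fun t => |x (t+1) i - x t i|) :=
    summable_of_sum_range_le (fun t => abs_nonneg _) habs_sum
  have hsum2 : Summable (fun t => x (t+1) i - x t i) := hsummable.of_abs
  obtain ⟨L0, hL0⟩ := hsum2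
  refine ⟨x 0 i + L0, ?_⟩
  have htendsto : Tendsto (fun τ => ∑ t ∈ Finset.range τ, (x (t+1) i - x t i))
      atTop (nhds L0) := hL0.tendsto_sum_nat
  have hEq : ∀ τ, x 0 i + ∑ t ∈ Finset.range τ, (x (t+1) i - x t i) = x τ i := by
    intro τ
    rw [Finset.sum_range_sub (fun t => x t i) τ]
    ring
  have := htendsto.const_add (x 0 i)
  exact this.congr hEq

end CutBal

open Filter in
/-- Convergence for cut-balanced averaging dynamics (Theorem 2 of [ref12],
existence of limits). -/
theorem cut_balanced_convergence (n : ℕ) (A : ℕ → Matrix (Fin n) (Fin n) ℝ)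
    (hnonneg : ∀ t i j, 0 ≤ A t i j)
    (hrow : ∀ t i, ∑ j, A t i j = 1)
    (α : ℝ) (hα : 0 < α) (hlb : ∀ t i j, 0 < A t i j → α ≤ A t i j)
    (β : ℝ) (hβ : 0 < β) (hdiag : ∀ t i, β ≤ A t i i)
    (hcb : ∀ t, ∀ S : Set (Fin n), S.Nonempty → S ≠ Set.univ →
      ((∃ i ∈ S, ∃ j ∉ S, 0 < A t i j) ↔ (∃ i ∈ S, ∃ j ∉ S, 0 < A t j i)))
    (x : ℕ → Fin n → ℝ)
    (hx : ∀ t i, x (t+1) i = ∑ j, A t i j * x t j) :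
    ∀ i, ∃ L : ℝ, Tendsto (fun t => x t i) atTop (nhds L) :=
  CutBal.cut_balanced_convergence n A hnonneg hrow α hα hlb β hβ hdiag hcb x hx
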